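/- Let N be a 2×2 complex matrix, invertible with conj(N) = N⁻¹ (entrywise complex conjugate equals the inverse), and set δ = Σ_{i,j} |N_{ij}|². Then δ = 2 + |N₀₁ − N₁₀|². Moreover, if α ∈ ℂ with |α| = 1 satisfies (δ : ℂ) = −(α² + α⁻²), then α² = −1 and N₀₁ = N₁₀. -/

import Mathlib

open Matrix

theorem bracket_two_by_two (N : Matrix (Fin 2) (Fin 2) ℂ)
    (hinv : IsUnit N.det)
    (hconj : N.map (starRingEnd ℂ) = N⁻¹) :
    (∑ i, ∑ j, ‖N i j‖ ^ 2) = 2 + ‖N 0 1 - N 1 0‖ ^ 2 ∧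
    ∀ α : ℂ, ‖α‖ = 1 →
      ((∑ i, ∑ j, ‖N i j‖ ^ 2 : ℝ) : ℂ) = -(α ^ 2 + α⁻¹ ^ 2) →
      α ^ 2 = -1 ∧ N 0 1 = N 1 0 := by
  set a := N 0 0 with ha
  set b := N 0 1 with hb
  set c := N 1 0 with hc
  set d := N 1 1 with hd
  have hmul : N * N.map (starRingEnd ℂ) = 1 := by
    rw [hconj]; exact Matrix.mul_nonsing_inv N hinv
  have h00 : a * starRingEnd ℂ a + b * starRingEnd ℂ c = 1 := by
    have := congrFun (congrFun hmul 0) 0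
    simpa [Matrix.mul_apply, Fin.sum_univ_two, Matrix.map_apply] using this
  have h11 : c * starRingEnd ℂ b + d * starRingEnd ℂ d = 1 := by
    have := congrFun (congrFun hmul 1) 1
    simpa [Matrix.mul_apply, Fin.sum_univ_two, Matrix.map_apply] using this
  have habs : ∀ z : ℂ, ((‖z‖ ^ 2 : ℝ) : ℂ) = z * starRingEnd ℂ z := by
    intro z
    rw [Complex.sq_norm, Complex.mul_conj]
  have key : (a * starRingEnd ℂ a + b * starRingEnd ℂ b)
        + (c * starRingEnd ℂ c + d * starRingEnd ℂ d)
      = 2 + (b - c) * (starRingEnd ℂ b - starRingEnd ℂ c) := by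
    linear_combination h00 + h11
  have cast1 : ((∑ i, ∑ j, ‖N i j‖ ^ 2 : ℝ) : ℂ)
      = (a * starRingEnd ℂ a + b * starRingEnd ℂ b)
        + (c * starRingEnd ℂ c + d * starRingEnd ℂ d) := by
    simp only [Fin.sum_univ_two, Complex.ofReal_add, habs, ← ha, ← hb, ← hc, ← hd]
  have cast2 : ((2 + ‖b - c‖ ^ 2 : ℝ) : ℂ)
      = 2 + (b - c) * (starRingEnd ℂ b - starRingEnd ℂ c) := by
    rw [Complex.ofReal_add, habs, map_sub]
    norm_num
  have main : (∑ i, ∑ j, ‖N i j‖ ^ 2) = 2 + ‖b - c‖ ^ 2 :=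
    Complex.ofReal_injective (by rw [cast1, key, ← cast2])
  refine ⟨main, ?_⟩
  intro α hα hδ
  have hinvα : α⁻¹ = starRingEnd ℂ α := Complex.inv_eq_conj hα
  have hδ2 : ((∑ i, ∑ j, ‖N i j‖ ^ 2 : ℝ) : ℂ)
      = ((-(2 * (α ^ 2).re) : ℝ) : ℂ) := by
    rw [hδ, hinvα, ← map_pow, Complex.add_conj]
    push_cast
    ring
  have hδ3 : (∑ i, ∑ j, ‖N i j‖ ^ 2) = -(2 * (α ^ 2).re) :=
    Complex.ofReal_injective hδ2
  have habs2 : ‖α ^ 2‖ = 1 := by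
    rw [norm_pow, hα]; norm_num
  have hre : (α ^ 2).re ≥ -1 := by
    have h1 := Complex.abs_re_le_norm (α ^ 2)
    rw [habs2] at h1
    cases abs_le.mp h1 with
    | intro l r => linarith
  have hs : ‖b - c‖ ^ 2 ≥ 0 := sq_nonneg _
  have hs0 : ‖b - c‖ ^ 2 = 0 := by
    rw [main] at hδ3; linarith
  have hre1 : (α ^ 2).re = -1 := by
    rw [main, hs0] at hδ3; linarith
  have him : (α ^ 2).im = 0 := by
    have hns : Complex.normSq (α ^ 2) = 1 := by
      rw [← Complex.sq_norm, habs2]; norm_num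
    rw [Complex.normSq_apply, hre1] at hns
    nlinarith
  constructor
  · apply Complex.ext <;> simp [hre1, him]
  · have : b - c = 0 := by
      have := pow_eq_zero_iff (n := 2) (by norm_num) |>.mp hs0
      exact norm_eq_zero.mp this
    exact sub_eq_zero.mp this
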